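/- Suppose in addition W : A → A is a derivation (the adjoint-weight operator 𝔴_T) satisfying W∘D − D∘W = −D. If a is a k-adjoint and b an ℓ-adjoint in the sense that W(a) = k•a and W(b) = ℓ•b, then W(β(k,a;ℓ,b)) = (k+ℓ−1)•β(k,a;ℓ,b). That is, the thermal bracket of a k-adjoint with an ℓ-adjoint transforms as a (k+ℓ−1)-adjoint. -/

import Mathlib

/-- The weighted thermal bracket of a `k`-adjoint `a` with an `ℓ`-adjoint `b`:
`β(k,a;ℓ,b) := k•(a*(D b)) − ℓ•(b*(D a))` (Appendix F). -/
def wThermalBracket {A : Type*} [CommRing A] (D : A → A) (k : ℤ) (a : A) (l : ℤ) (b : A) : A :=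
  k • (a * D b) - l • (b * D a)

/-- **The thermal bracket of a k-adjoint with an ℓ-adjoint is a (k+ℓ−1)-adjoint
(Appendix F).**  Let `A` be a commutative ring, `D : A → A` a derivation, and `W : A → A` a
derivation (the adjoint-weight operator `𝔴_T`) satisfying `W∘D − D∘W = −D`.  If `W a = k•a`
and `W b = ℓ•b` (so `a` is a `k`-adjoint and `b` an `ℓ`-adjoint), then
`W(β(k,a;ℓ,b)) = (k+ℓ−1)•β(k,a;ℓ,b)`. -/
theorem wThermalBracket_weight {A : Type*} [CommRing A] (D W : A → A)
    (hDadd : ∀ a b : A, D (a + b) = D a + D b)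
    (hDleib : ∀ a b : A, D (a * b) = D a * b + a * D b)
    (hWadd : ∀ a b : A, W (a + b) = W a + W b)
    (hWleib : ∀ a b : A, W (a * b) = W a * b + a * W b)
    (hWD : ∀ a : A, W (D a) - D (W a) = -D a)
    (k l : ℤ) (a b : A) (ha : W a = k • a) (hb : W b = l • b) :
    W (wThermalBracket D k a l b) = (k + l - 1) • wThermalBracket D k a l b := by
  have Dh : ∀ (n : ℤ) (x : A), D (n • x) = n • D x := fun n x =>
    (AddMonoidHom.mk' D hDadd).map_zsmul n x
  have Wh : ∀ (n : ℤ) (x : A), W (n • x) = n • W x := fun n x =>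
    (AddMonoidHom.mk' W hWadd).map_zsmul n x
  have Wsub : ∀ x y : A, W (x - y) = W x - W y := fun x y =>
    (AddMonoidHom.mk' W hWadd).map_sub x y
  have hWDb : W (D b) = (l - 1) • D b := by
    have := hWD b
    rw [hb, Dh] at this
    have : W (D b) = l • D b - D b := by linear_combination this
    rw [this, sub_smul, one_smul]
  have hWDa : W (D a) = (k - 1) • D a := by
    have := hWD a
    rw [ha, Dh] at this
    have : W (D a) = k • D a - D a := by linear_combination this
    rw [this, sub_smul, one_smul]
  unfold wThermalBracket
  rw [Wsub, Wh, Wh, hWleib, hWleib, ha, hb, hWDa, hWDb,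
    smul_mul_assoc, mul_smul_comm, smul_mul_assoc, mul_smul_comm,
    ← add_smul, ← add_smul]
  simp only [smul_sub, smul_smul]
  rw [show k + (l - 1) = k + l - 1 by ring, show l + (k - 1) = k + l - 1 by ring]
  ring_nf
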